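/- Let (𝒢, Γ) be a finite tree of finite p-groups with cyclic edge groups such that 𝒢(e) ≠ 𝒢(v) for every edge e and incident vertex v, and let Γ be a segment with consecutively numbered edges. Then for the fundamental pro-p group G = Π₁(𝒢, Γ), d(G) ≥ (number of edges of Γ)/2, so d(G) tends to infinity as |Γ| tends to infinity. -/

import Mathlib

/-- A pro-`p` group: a compact, totally disconnected topological group in which
every open normal subgroup has `p`-power index. -/
def IsProP (p : ℕ) (G : Type*) [Group G] [TopologicalSpace G] [IsTopologicalGroup G] : Prop :=
  CompactSpace G ∧ TotallyDisconnectedSpace G ∧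
    ∀ U : Subgroup G, U.Normal → IsOpen (U : Set G) → ∃ n : ℕ, U.index = p ^ n

/-- `dmin G` is the minimal number of topological generators of `G`. -/
noncomputable def dmin (G : Type*) [Group G] [TopologicalSpace G] [IsTopologicalGroup G] : ℕ :=
  sInf {n : ℕ | ∃ S : Finset G, S.card = n ∧
    (Subgroup.closure (S : Set G)).topologicalClosure = ⊤}

/-- `G` is topologically finitely generated. -/
def TopFG (G : Type*) [Group G] [TopologicalSpace G] [IsTopologicalGroup G] : Prop :=
  ∃ S : Finset G, (Subgroup.closure (S : Set G)).topologicalClosure = ⊤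

/-- `G` is procyclic: topologically generated by one element. -/
def Procyclic (G : Type*) [Group G] [TopologicalSpace G] [IsTopologicalGroup G] : Prop :=
  ∃ c : G, (Subgroup.closure ({c} : Set G)).topologicalClosure = ⊤

section Aux

variable (p : ℕ) [Fact p.Prime]

/-- The `ZMod p`-submodule of `V → ZMod p` of "additive characters". -/
def ChS (V : Type*) [Group V] : Submodule (ZMod p) (V → ZMod p) where
  carrier := {f | ∀ x y, f (x * y) = f x + f y}
  add_mem' := by
    intro f g hf hg x y
    simp only [Pi.add_apply, hf x y, hg x y]; ring
  zero_mem' := by intro x y; simp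
  smul_mem' := by
    intro c f hf x y
    simp only [Pi.smul_apply, hf x y, smul_add]

variable {p}
variable {V : Type*} [Group V]

theorem chs_mem_iff (f : V → ZMod p) : f ∈ ChS p V ↔ ∀ x y, f (x * y) = f x + f y := Iff.rfl

theorem chs_one {f : V → ZMod p} (hf : f ∈ ChS p V) : f 1 = 0 := by
  have := (chs_mem_iff f).1 hf 1 1
  simpa using this

theorem chs_pow {f : V → ZMod p} (hf : f ∈ ChS p V) (x : V) (k : ℕ) :
    f (x ^ k) = (k : ZMod p) * f x := by
  induction k with
  | zero => simpa using chs_one hf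
  | succ k ih => rw [pow_succ, (chs_mem_iff f).1 hf _ x, ih]; push_cast; ring

theorem chs_inv {f : V → ZMod p} (hf : f ∈ ChS p V) (x : V) : f x⁻¹ = - f x := by
  have := (chs_mem_iff f).1 hf x x⁻¹
  rw [mul_inv_cancel, chs_one hf] at this
  linear_combination -this

theorem chs_zpow {f : V → ZMod p} (hf : f ∈ ChS p V) (x : V) (k : ℤ) :
    f (x ^ k) = (k : ZMod p) * f x := by
  cases k with
  | ofNat k => simpa using chs_pow hf x k
  | negSucc k =>
      rw [zpow_negSucc, chs_inv hf, chs_pow hf]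
      push_cast; ring

theorem mem_chs_of_monoidHom (χ : V →* Multiplicative (ZMod p)) :
    (fun v => (χ v).toAdd) ∈ ChS p V := by
  intro x y; simp

theorem nontrivial_of_proper_subgroup (H : Subgroup V) (hH : H ≠ ⊤) : Nontrivial V := by
  by_contra h
  rw [not_nontrivial_iff_subsingleton] at h
  apply hH
  ext x
  simp only [Subgroup.mem_top, iff_true]
  rw [Subsingleton.elim x 1]
  exact H.one_mem

/-- Frattini-style: a proper subgroup of a finite `p`-group is killed by some
nonzero additive character. -/
theorem exists_char_vanishing [Finite V] (hV : IsPGroup p V)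
    (H : Subgroup V) (hH : H ≠ ⊤) :
    ∃ f ∈ ChS p V, f ≠ 0 ∧ ∀ h ∈ H, f h = 0 := by
  classical
  haveI : Finite (Subgroup V) := Finite.of_injective _ SetLike.coe_injective
  haveI : Group.IsNilpotent V := hV.isNilpotent
  obtain ⟨M, hM, hHM⟩ := (eq_top_or_exists_le_coatom H).resolve_left hH
  haveI hMn : M.Normal :=
    Subgroup.NormalizerCondition.normal_of_coatom M
      (normalizerCondition_of_isNilpotent (G := V)) hM
  set Q := V ⧸ M with hQdef
  have hmk : Function.Surjective (QuotientGroup.mk' M) := QuotientGroup.mk'_surjective M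
  have hQp : IsPGroup p Q := hV.to_quotient M
  have hsimple : ∀ K : Subgroup Q, K = ⊥ ∨ K = ⊤ := by
    intro K
    have hle : M ≤ K.comap (QuotientGroup.mk' M) := by
      intro m hm
      have h1 : (QuotientGroup.mk' M) m = 1 := (QuotientGroup.eq_one_iff m).2 hm
      rw [Subgroup.mem_comap, h1]
      exact K.one_mem
    rcases eq_or_lt_of_le hle with heq | hlt
    · left
      have h2 := Subgroup.map_comap_eq_self_of_surjective hmk K
      rw [← h2, ← heq]
      ext x
      simp only [Subgroup.mem_map, Subgroup.mem_bot]
      constructor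
      · rintro ⟨m, hm, rfl⟩
        exact (QuotientGroup.eq_one_iff m).2 hm
      · rintro rfl; exact ⟨1, M.one_mem, rfl⟩
    · right
      have h1 := hM.2 _ hlt
      have h2 := Subgroup.map_comap_eq_self_of_surjective hmk K
      rw [← h2, h1]
      simpa using Subgroup.map_top_of_surjective _ hmk
  obtain ⟨v, hv⟩ : ∃ v : V, v ∉ M := by
    by_contra h
    push_neg at h
    exact hM.1 (Subgroup.eq_top_iff' M |>.2 h)
  set x : Q := QuotientGroup.mk' M v with hxdef
  have hx : x ≠ 1 := fun h => hv ((QuotientGroup.eq_one_iff v).1 h)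
  obtain ⟨k, hk⟩ := hQp x
  have hdvd : orderOf x ∣ p ^ k := orderOf_dvd_of_pow_eq_one hk
  obtain ⟨j, hjk, hj⟩ := (Nat.dvd_prime_pow (Fact.out : p.Prime)).1 hdvd
  have hj1 : 1 ≤ j := by
    rcases Nat.eq_zero_or_pos j with h0 | h
    · exfalso; apply hx
      have : orderOf x = 1 := by rw [hj, h0, pow_zero]
      exact orderOf_eq_one_iff.1 this
    · exact h
  set z := x ^ (p ^ (j - 1)) with hz
  have hp1 : 0 < p := (Fact.out : p.Prime).pos
  have hordz : orderOf z = p := by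
    rw [hz, orderOf_pow, hj, Nat.gcd_eq_right (pow_dvd_pow p (Nat.sub_le j 1)),
      Nat.pow_div (Nat.sub_le j 1) hp1]
    rw [show j - (j - 1) = 1 by omega, pow_one]
  have hzne : z ≠ 1 := by
    intro h
    rw [h, orderOf_one] at hordz
    exact absurd hordz.symm (Fact.out : p.Prime).one_lt.ne'
  have hztop : Subgroup.zpowers z = ⊤ := by
    rcases hsimple (Subgroup.zpowers z) with h | h
    · exact absurd ((Subgroup.zpowers_eq_bot).1 h) hzne
    · exact h
  have hcard : Nat.card Q = p := by
    rw [← Subgroup.card_top (G := Q), ← hztop, Nat.card_zpowers, hordz]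
  haveI hQcyc : IsCyclic Q := by
    refine ⟨⟨z, fun y => ?_⟩⟩
    have : y ∈ Subgroup.zpowers z := by rw [hztop]; trivial
    exact this
  have e : Multiplicative (ZMod p) ≃* Q := hcard ▸ zmodCyclicMulEquiv hQcyc
  set χ : V →* Multiplicative (ZMod p) := (e.symm.toMonoidHom).comp (QuotientGroup.mk' M)
    with hχ
  refine ⟨fun v => (χ v).toAdd, mem_chs_of_monoidHom χ, ?_, ?_⟩
  · intro h0
    have hsurj : Function.Surjective χ := e.symm.surjective.comp hmk
    obtain ⟨v, hv⟩ := hsurj (Multiplicative.ofAdd (1 : ZMod p))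
    have := congrFun h0 v
    simp only [Pi.zero_apply, hv] at this
    exact one_ne_zero this
  · intro h hh
    have h1 : (QuotientGroup.mk' M) h = 1 := (QuotientGroup.eq_one_iff h).2 (hHM hh)
    simp [hχ, h1]

theorem one_le_finrank_chs [Finite V] (hV : IsPGroup p V)
    (hnt : Nontrivial V) : 1 ≤ Module.finrank (ZMod p) (ChS p V) := by
  obtain ⟨f, hf, hne, -⟩ := exists_char_vanishing hV ⊥ bot_ne_top
  have : Nontrivial (ChS p V) :=
    ⟨⟨f, hf⟩, 0, fun h => hne (congrArg Subtype.val h)⟩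
  exact Module.finrank_pos_iff.2 this

theorem two_le_finrank_chs [Finite V] (hV : IsPGroup p V)
    (H : Subgroup V) (hH : H ≠ ⊤) (v : V) (hv : v ∈ H)
    (f : V → ZMod p) (hf : f ∈ ChS p V) (hfv : f v ≠ 0) :
    2 ≤ Module.finrank (ZMod p) (ChS p V) := by
  obtain ⟨f', hf', hne', hvan⟩ := exists_char_vanishing hV H hH
  have hind : LinearIndependent (ZMod p) ![(⟨f, hf⟩ : ChS p V), ⟨f', hf'⟩] := by
    rw [LinearIndependent.pair_iff]
    intro s t hst
    have h1 : s • f + t • f' = 0 := by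
      have := congrArg Subtype.val hst
      simpa using this
    have h2 : s * f v = 0 := by
      have := congrFun h1 v
      simp only [Pi.add_apply, Pi.smul_apply, smul_eq_mul, Pi.zero_apply, hvan v hv,
        mul_zero, add_zero] at this
      exact this
    have hs : s = 0 := by
      rcases mul_eq_zero.1 h2 with h | h
      · exact h
      · exact absurd h hfv
    refine ⟨hs, ?_⟩
    rw [hs, zero_smul, zero_add] at h1
    by_contra ht
    exact hne' (by
      ext x
      have := congrFun h1 x
      simp only [Pi.smul_apply, smul_eq_mul, Pi.zero_apply] at this
      rcases mul_eq_zero.1 this with h | h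
      · exact absurd h ht
      · simpa using h)
  have := hind.fintype_card_le_finrank
  simpa using this

variable (p) in
/-- The submodule attached to a subgroup of `Multiplicative M`, `M` a `ZMod p`-module. -/
def subgroupToSubmodule (M : Type*) [AddCommGroup M] [Module (ZMod p) M]
    (Q : Subgroup (Multiplicative M)) : Submodule (ZMod p) M where
  carrier := {x : M | Multiplicative.ofAdd x ∈ Q}
  add_mem' := by
    intro a b ha hb
    have := Q.mul_mem ha hb
    exact this
  zero_mem' := by
    have := Q.one_mem
    simpa using this
  smul_mem' := by
    intro c x hx
    have h1 : c • x = c.val • x := by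
      rw [← Nat.cast_smul_eq_nsmul (ZMod p) c.val x, ZMod.natCast_val, ZMod.cast_id]
    have h2 : Multiplicative.ofAdd (c.val • x) = (Multiplicative.ofAdd x) ^ c.val := by
      simp
    simp only [Set.mem_setOf_eq, h1, h2]
    exact Q.pow_mem hx c.val

theorem mem_subgroupToSubmodule {M : Type*} [AddCommGroup M] [Module (ZMod p) M]
    {Q : Subgroup (Multiplicative M)} {x : M} :
    x ∈ subgroupToSubmodule p M Q ↔ Multiplicative.ofAdd x ∈ Q := Iff.rfl

end Aux
set_option maxHeartbeats 1000000 in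
/-- For the fundamental pro-p group `G` of a segment of finite p-groups with cyclic edge
groups properly contained in the incident vertex groups. -/
theorem dmin_segment_ge (p : ℕ) (hp : p.Prime) (n : ℕ)
    (V : Fin (n + 1) → Type) [∀ i, Group (V i)] [∀ i, Finite (V i)]
    (hVp : ∀ i, IsPGroup p (V i))
    (E : Fin n → Type) [∀ e, Group (E e)] [∀ e, Finite (E e)]
    (hEp : ∀ e, IsPGroup p (E e)) (hEcyc : ∀ e, IsCyclic (E e))
    (l : ∀ e : Fin n, E e →* V e.castSucc) (r : ∀ e : Fin n, E e →* V e.succ)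
    (hl : ∀ e, Function.Injective (l e) ∧ ¬Function.Surjective (l e))
    (hr : ∀ e, Function.Injective (r e) ∧ ¬Function.Surjective (r e))
    (G : Type) [Group G] [TopologicalSpace G] [IsTopologicalGroup G] (hG : IsProP p G)
    (ι : ∀ i, V i →* G) (hinj : ∀ i, Function.Injective (ι i))
    (hcomm : ∀ e : Fin n, (ι e.castSucc).comp (l e) = (ι e.succ).comp (r e))
    (hgen : (Subgroup.closure (⋃ i, Set.range ⇑(ι i))).topologicalClosure = ⊤)
    -- universal property of the fundamental pro-p group of the segment of groups
    (huniv : ∀ (P : Type) [Group P] [TopologicalSpace P] [IsTopologicalGroup P], IsProP p P →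
      ∀ f : ∀ i, V i →* P,
        (∀ e : Fin n, (f e.castSucc).comp (l e) = (f e.succ).comp (r e)) →
        ∃ F : G →* P, Continuous F ∧ ∀ i, F.comp (ι i) = f i) :
    n / 2 ≤ dmin G := by
  rcases Nat.eq_zero_or_pos n with hn0 | hn
  · simpa [hn0] using Nat.zero_le (dmin G)
  haveI : Fact p.Prime := ⟨hp⟩
  haveI : NeZero p := ⟨hp.pos.ne'⟩
  classical
  -- choose generators of the edge groups
  have hgens : ∀ e : Fin n, ∃ g : E e, ∀ x : E e, x ∈ Subgroup.zpowers g :=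
    fun e => (hEcyc e).exists_generator
  choose g hg using hgens
  -- ranges of edge maps are proper subgroups
  have hlrange : ∀ e, (l e).range ≠ ⊤ := fun e h => (hl e).2 (MonoidHom.range_eq_top.1 h)
  have hrrange : ∀ e, (r e).range ≠ ⊤ := fun e h => (hr e).2 (MonoidHom.range_eq_top.1 h)
  -- every vertex group is nontrivial
  have hVnt : ∀ i, Nontrivial (V i) := by
    intro i
    rcases lt_or_ge (i : ℕ) n with h | h
    · have hcs : (⟨(i : ℕ), h⟩ : Fin n).castSucc = i := by
        apply Fin.ext; simp
      exact hcs ▸ nontrivial_of_proper_subgroup _ (hlrange ⟨(i : ℕ), h⟩)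
    · have hival : (i : ℕ) = n := le_antisymm (Nat.lt_succ_iff.1 i.isLt) h
      have hsc : (⟨n - 1, by omega⟩ : Fin n).succ = i := by
        apply Fin.ext; simp [hival]; omega
      exact hsc ▸ nontrivial_of_proper_subgroup _ (hrrange ⟨n - 1, by omega⟩)
  -- the space of compatible families of characters
  let C : Submodule (ZMod p) (∀ i, V i → ZMod p) :=
    Submodule.pi Set.univ (fun i => ChS p (V i))
  let ψ : (∀ i, V i → ZMod p) →ₗ[ZMod p] (Fin n → ZMod p) :=
    { toFun := fun c e => c e.castSucc (l e (g e)) - c e.succ (r e (g e))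
      map_add' := by intro a b; funext e; simp only [Pi.add_apply]; ring
      map_smul' := by
        intro c a; funext e
        simp only [Pi.smul_apply, smul_eq_mul, RingHom.id_apply]; ring }
  let KC : Submodule (ZMod p) (∀ i, V i → ZMod p) := C ⊓ LinearMap.ker ψ
  set m := Module.finrank (ZMod p) KC with hmdef
  -- rank-nullity for ψ restricted to C
  let ψC : C →ₗ[ZMod p] (Fin n → ZMod p) := ψ.domRestrict C
  have hker : LinearMap.ker ψC = KC.comap C.subtype := by
    ext x
    simp only [LinearMap.mem_ker, Submodule.mem_comap, Submodule.coe_subtype,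
      Submodule.mem_inf, LinearMap.domRestrict_apply, ψC, KC]
    exact ⟨fun h => ⟨x.2, h⟩, fun h => h.2⟩
  have hkerfr : Module.finrank (ZMod p) (LinearMap.ker ψC) = m := by
    rw [hker]
    exact LinearEquiv.finrank_eq (Submodule.comapSubtypeEquivOfLe inf_le_left)
  have hranknull :
      Module.finrank (ZMod p) (LinearMap.range ψC) + m = Module.finrank (ZMod p) C := by
    rw [← hkerfr]
    exact LinearMap.finrank_range_add_finrank_ker ψC
  -- bad edges
  let T : Finset (Fin (n + 1)) :=
    Finset.univ.filter (fun i => 2 ≤ Module.finrank (ZMod p) (ChS p (V i)))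
  let Z : Finset (Fin n) :=
    Finset.univ.filter (fun e =>
      (∃ f ∈ ChS p (V e.castSucc), f (l e (g e)) ≠ 0) ∨
      (∃ f ∈ ChS p (V e.succ), f (r e (g e)) ≠ 0))
  have hgoodzero : ∀ c ∈ C, ∀ e : Fin n, e ∉ Z → ψ c e = 0 := by
    intro c hc e he
    simp only [Z, Finset.mem_filter, Finset.mem_univ, true_and, not_or] at he
    have h1 : c e.castSucc (l e (g e)) = 0 := by
      by_contra h
      exact he.1 ⟨c e.castSucc, (Submodule.mem_pi.1 hc) e.castSucc (Set.mem_univ _), h⟩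
    have h2 : c e.succ (r e (g e)) = 0 := by
      by_contra h
      exact he.2 ⟨c e.succ, (Submodule.mem_pi.1 hc) e.succ (Set.mem_univ _), h⟩
    show c e.castSucc (l e (g e)) - c e.succ (r e (g e)) = 0
    rw [h1, h2, sub_zero]
  -- the range of ψC has dimension at most |Z|
  have hrangeZ : Module.finrank (ZMod p) (LinearMap.range ψC) ≤ Z.card := by
    let ρ : LinearMap.range ψC →ₗ[ZMod p] ({e : Fin n // e ∈ Z} → ZMod p) :=
      { toFun := fun v => fun e => v.1 e.1
        map_add' := fun a b => rfl
        map_smul' := fun c a => rfl }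
    have hρinj : Function.Injective ρ := by
      intro a b hab
      apply Subtype.ext
      funext e
      by_cases he : e ∈ Z
      · exact congrFun hab ⟨e, he⟩
      · obtain ⟨ca, hca⟩ := a.2
        obtain ⟨cb, hcb⟩ := b.2
        rw [← hca, ← hcb]
        have h1 : ψ (ca : ∀ i, V i → ZMod p) e = 0 := hgoodzero _ ca.2 e he
        have h2 : ψ (cb : ∀ i, V i → ZMod p) e = 0 := hgoodzero _ cb.2 e he
        exact h1.trans h2.symm
    calc Module.finrank (ZMod p) (LinearMap.range ψC)
        ≤ Module.finrank (ZMod p) ({e : Fin n // e ∈ Z} → ZMod p) :=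
          LinearMap.finrank_le_finrank_of_injective hρinj
      _ = Z.card := by rw [Module.finrank_pi]; exact Fintype.card_coe Z
  -- |C| is at least the sum of the dimensions of the character spaces
  have hCsum : ∑ i, Module.finrank (ZMod p) (ChS p (V i)) ≤ Module.finrank (ZMod p) C := by
    let jmap : (∀ i, ChS p (V i)) →ₗ[ZMod p] (∀ i, V i → ZMod p) :=
      { toFun := fun c i => (c i : V i → ZMod p)
        map_add' := fun a b => rfl
        map_smul' := fun c a => rfl }
    have hjC : ∀ c, jmap c ∈ C := fun c => Submodule.mem_pi.2 fun i _ => (c i).2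
    let jmap' : (∀ i, ChS p (V i)) →ₗ[ZMod p] C := jmap.codRestrict C hjC
    have hjinj : Function.Injective jmap' := by
      intro a b hab
      funext i
      apply Subtype.ext
      exact congrFun (congrArg Subtype.val hab) i
    rw [← Module.finrank_pi_fintype]
    exact LinearMap.finrank_le_finrank_of_injective hjinj
  have hsumT : (n + 1) + T.card ≤ ∑ i, Module.finrank (ZMod p) (ChS p (V i)) := by
    have hbound : ∀ i : Fin (n + 1),
        (if i ∈ T then 2 else 1) ≤ Module.finrank (ZMod p) (ChS p (V i)) := by
      intro i
      split
      · exact (Finset.mem_filter.1 ‹i ∈ T›).2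
      · exact one_le_finrank_chs (hVp i) (hVnt i)
    calc (n + 1) + T.card = ∑ i : Fin (n + 1), (if i ∈ T then 2 else 1) := by
          have h1 : ∀ i : Fin (n + 1), (if i ∈ T then 2 else 1 : ℕ)
              = 1 + (if i ∈ T then 1 else 0) := by intro i; split <;> rfl
          simp_rw [h1]
          rw [Finset.sum_add_distrib, Finset.sum_const, Finset.sum_ite_mem,
            Finset.univ_inter, Finset.sum_const]
          simp
      _ ≤ _ := Finset.sum_le_sum (fun i _ => hbound i)
  -- |Z| ≤ 2 |T|
  have hZT : Z.card ≤ 2 * T.card := by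
    let φm : Fin n → Fin (n + 1) × Bool := fun e =>
      if (∃ f ∈ ChS p (V e.castSucc), f (l e (g e)) ≠ 0) then (e.castSucc, true)
      else (e.succ, false)
    have hmem : ∀ e ∈ Z, φm e ∈ T ×ˢ (Finset.univ : Finset Bool) := by
      intro e he
      simp only [Z, Finset.mem_filter, Finset.mem_univ, true_and] at he
      by_cases h : (∃ f ∈ ChS p (V e.castSucc), f (l e (g e)) ≠ 0)
      · obtain ⟨f, hf, hfne⟩ := h
        simp only [φm, if_pos (⟨f, hf, hfne⟩ :
          ∃ f ∈ ChS p (V e.castSucc), f (l e (g e)) ≠ 0), Finset.mem_product,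
          Finset.mem_univ, and_true]
        simp only [T, Finset.mem_filter, Finset.mem_univ, true_and]
        exact two_le_finrank_chs (hVp e.castSucc) (l e).range (hlrange e)
          (l e (g e)) ⟨g e, rfl⟩ f hf hfne
      · obtain ⟨f, hf, hfne⟩ := he.resolve_left h
        simp only [φm, if_neg h, Finset.mem_product, Finset.mem_univ, and_true]
        simp only [T, Finset.mem_filter, Finset.mem_univ, true_and]
        exact two_le_finrank_chs (hVp e.succ) (r e).range (hrrange e)
          (r e (g e)) ⟨g e, rfl⟩ f hf hfne
    have hinj : Set.InjOn φm Z := by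
      intro a _ b _ hab
      by_cases hA : (∃ f ∈ ChS p (V a.castSucc), f (l a (g a)) ≠ 0) <;>
        by_cases hB : (∃ f ∈ ChS p (V b.castSucc), f (l b (g b)) ≠ 0) <;>
          simp only [φm, if_pos, if_neg, hA, hB, if_true, if_false, Prod.mk.injEq] at hab
      · exact Fin.castSucc_injective n hab.1
      · exact absurd hab.2 (by simp)
      · exact absurd hab.2 (by simp)
      · exact Fin.succ_injective n hab.1
    calc Z.card ≤ (T ×ˢ (Finset.univ : Finset Bool)).card :=
          Finset.card_le_card_of_injOn φm hmem hinj
      _ = 2 * T.card := by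
          rw [Finset.card_product]
          simp [mul_comm]
  have hZn : Z.card ≤ n := by
    calc Z.card ≤ (Finset.univ : Finset (Fin n)).card := Finset.card_le_univ Z
      _ = n := by simp
  -- main inequality
  have hmain : n + 2 ≤ 2 * m := by omega
  -- Part 2: construct an elementary abelian quotient of `G` of rank `m`
  haveI : Fact (1 < p) := ⟨hp.one_lt⟩
  let b : Module.Basis (Fin m) (ZMod p) KC := Module.finBasis (ZMod p) KC
  have hbC : ∀ j, (b j : ∀ i, V i → ZMod p) ∈ C := fun j => ((b j).2).1
  have hbchs : ∀ j i, ((b j : ∀ i, V i → ZMod p)) i ∈ ChS p (V i) :=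
    fun j i => (Submodule.mem_pi.1 (hbC j)) i (Set.mem_univ i)
  have hbker : ∀ j, ψ ((b j : ∀ i, V i → ZMod p)) = 0 := fun j =>
    LinearMap.mem_ker.1 ((b j).2).2
  let P := Multiplicative (Fin m → ZMod p)
  letI : TopologicalSpace P := ⊥
  haveI : DiscreteTopology P := ⟨rfl⟩
  haveI : IsTopologicalGroup P :=
    { continuous_mul := continuous_of_discreteTopology
      continuous_inv := continuous_of_discreteTopology }
  have hPpro : IsProP p P := by
    refine ⟨inferInstance, inferInstance, fun U _ _ => ?_⟩
    have hdvd : U.index ∣ Nat.card P := Subgroup.index_dvd_card U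
    have hcard : Nat.card P = p ^ m := by
      have h1 : Nat.card P = Nat.card (Fin m → ZMod p) := rfl
      rw [h1, Nat.card_fun, Nat.card_zmod, Nat.card_eq_fintype_card, Fintype.card_fin]
    rw [hcard] at hdvd
    obtain ⟨k, _, hek⟩ := (Nat.dvd_prime_pow hp).1 hdvd
    exact ⟨k, hek⟩
  let fP : ∀ i, V i →* P := fun i =>
    { toFun := fun v => Multiplicative.ofAdd (fun j => (b j : ∀ i, V i → ZMod p) i v)
      map_one' := by
        have h0 : (fun j => (b j : ∀ i, V i → ZMod p) i 1) = (0 : Fin m → ZMod p) := by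
          funext j; exact chs_one (hbchs j i)
        show Multiplicative.ofAdd _ = 1
        rw [h0]; rfl
      map_mul' := by
        intro x y
        show Multiplicative.ofAdd _ =
          Multiplicative.ofAdd _ * Multiplicative.ofAdd _
        rw [← ofAdd_add]
        congr 1
        funext j
        exact (chs_mem_iff _).1 (hbchs j i) x y }
  have hfPapply : ∀ i (v : V i), fP i v =
      Multiplicative.ofAdd (fun j => (b j : ∀ i, V i → ZMod p) i v) := fun i v => rfl
  have hcompat : ∀ e : Fin n, (fP e.castSucc).comp (l e) = (fP e.succ).comp (r e) := by
    intro e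
    refine MonoidHom.ext fun x => ?_
    have key : (fun j => (b j : ∀ i, V i → ZMod p) e.castSucc (l e x))
        = (fun j => (b j : ∀ i, V i → ZMod p) e.succ (r e x)) := by
      funext j
      obtain ⟨k, hk⟩ := Subgroup.mem_zpowers_iff.1 (hg e x)
      have hbe : (b j : ∀ i, V i → ZMod p) e.castSucc (l e (g e))
          = (b j : ∀ i, V i → ZMod p) e.succ (r e (g e)) := by
        have h0 : (b j : ∀ i, V i → ZMod p) e.castSucc (l e (g e))
            - (b j : ∀ i, V i → ZMod p) e.succ (r e (g e)) = 0 := congrFun (hbker j) e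
        exact sub_eq_zero.1 h0
      have h1 : (l e) x = (l e (g e)) ^ k := by rw [← hk, map_zpow]
      have h2 : (r e) x = (r e (g e)) ^ k := by rw [← hk, map_zpow]
      rw [h1, h2, chs_zpow (hbchs j e.castSucc), chs_zpow (hbchs j e.succ), hbe]
    show Multiplicative.ofAdd (fun j => (b j : ∀ i, V i → ZMod p) e.castSucc (l e x))
        = Multiplicative.ofAdd (fun j => (b j : ∀ i, V i → ZMod p) e.succ (r e x))
    rw [key]
  obtain ⟨F, hFcont, hFι⟩ := huniv P hPpro fP hcompat
  have hFf : ∀ i (v : V i), F (ι i v) = fP i v := fun i v => DFunLike.congr_fun (hFι i) v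
  -- the images of the vertex groups span everything
  let Sgen : Set (Fin m → ZMod p) :=
    ⋃ i, Set.range (fun v : V i => (fun j => (b j : ∀ i, V i → ZMod p) i v))
  have hspan : Submodule.span (ZMod p) Sgen = ⊤ := by
    by_contra hW
    haveI : Nontrivial ((Fin m → ZMod p) ⧸ Submodule.span (ZMod p) Sgen) :=
      Submodule.Quotient.nontrivial_iff.2 hW
    have hfr : 0 < Module.finrank (ZMod p)
        ((Fin m → ZMod p) ⧸ Submodule.span (ZMod p) Sgen) :=
      Module.finrank_pos_iff.2 inferInstance
    let b' := Module.finBasis (ZMod p) ((Fin m → ZMod p) ⧸ Submodule.span (ZMod p) Sgen)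
    let lam := b'.coord ⟨0, hfr⟩
    let φ : (Fin m → ZMod p) →ₗ[ZMod p] ZMod p :=
      lam ∘ₗ (Submodule.span (ZMod p) Sgen).mkQ
    have hφS : ∀ x ∈ Sgen, φ x = 0 := by
      intro x hx
      have h1 : (Submodule.span (ZMod p) Sgen).mkQ x = 0 := by
        rw [Submodule.mkQ_apply, Submodule.Quotient.mk_eq_zero]
        exact Submodule.subset_span hx
      show lam _ = 0
      rw [h1, map_zero]
    have hrep : ∀ x : Fin m → ZMod p,
        φ x = ∑ j, x j • φ (fun k => if j = k then 1 else 0) :=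
      fun x => LinearMap.pi_apply_eq_sum_univ φ x
    set a : Fin m → ZMod p := fun j => φ (fun k => if j = k then 1 else 0) with hadef
    have hκ : (∑ j, a j • b j) = (0 : KC) := by
      apply Subtype.ext
      have hval : ((∑ j, a j • b j : KC) : ∀ i, V i → ZMod p)
          = ∑ j, a j • (b j : ∀ i, V i → ZMod p) := by
        have := map_sum KC.subtype (fun j => a j • b j) Finset.univ
        simpa using this
      rw [hval]
      show _ = (0 : ∀ i, V i → ZMod p)
      funext i v
      have h2 : (∑ j, a j • (b j : ∀ i, V i → ZMod p)) i v
          = ∑ j, ((b j : ∀ i, V i → ZMod p) i v) • a j := by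
        rw [Finset.sum_apply, Finset.sum_apply]
        apply Finset.sum_congr rfl
        intro j _
        simp only [Pi.smul_apply, smul_eq_mul]
        ring
      have hmem : (fun j => (b j : ∀ i, V i → ZMod p) i v) ∈ Sgen :=
        Set.mem_iUnion.2 ⟨i, Set.mem_range.2 ⟨v, rfl⟩⟩
      have h3 := hφS _ hmem
      rw [hrep] at h3
      rw [h2]
      exact h3
    have ha : ∀ j, a j = 0 :=
      Fintype.linearIndependent_iff.1 b.linearIndependent a hκ
    obtain ⟨x0, hx0⟩ := (Submodule.span (ZMod p) Sgen).mkQ_surjective (b' ⟨0, hfr⟩)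
    have h1 : φ x0 = 1 := by
      show lam _ = _
      rw [hx0]
      simp [lam, Module.Basis.coord_apply, Module.Basis.repr_self]
    have h2 : φ x0 = 0 := by
      rw [hrep x0]
      apply Finset.sum_eq_zero
      intro j _
      rw [show φ (fun k => if j = k then 1 else 0) = a j from rfl, ha j, smul_zero]
    exact one_ne_zero (h1.symm.trans h2)
  -- F hits every element of P
  have hFr : ∀ x : Fin m → ZMod p, Multiplicative.ofAdd x ∈ F.range := by
    have hsub : Sgen ⊆
        (subgroupToSubmodule p (Fin m → ZMod p) F.range : Set (Fin m → ZMod p)) := by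
      intro x hx
      obtain ⟨s, ⟨i, rfl⟩, hs⟩ := hx
      obtain ⟨v, rfl⟩ := hs
      show Multiplicative.ofAdd _ ∈ F.range
      exact ⟨ι i v, by rw [hFf i v]; rfl⟩
    intro x
    have h := Submodule.span_le.2 hsub
    rw [hspan] at h
    exact h Submodule.mem_top
  -- finishing: every topological generating set has at least m elements
  have hfinU : (⋃ i, Set.range ⇑(ι i)).Finite :=
    Set.finite_iUnion (fun i => Set.finite_range _)
  have hnonempty : {k : ℕ | ∃ S : Finset G, S.card = k ∧
      (Subgroup.closure (S : Set G)).topologicalClosure = ⊤}.Nonempty := by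
    refine ⟨hfinU.toFinset.card, hfinU.toFinset, rfl, ?_⟩
    rw [Set.Finite.coe_toFinset]
    exact hgen
  unfold dmin
  refine le_csInf hnonempty ?_
  rintro k ⟨S, rfl, hS⟩
  -- the image of S topologically generates P, hence generates it
  have hQtop : Subgroup.closure (⇑F '' (S : Set G)) = ⊤ := by
    rw [eq_top_iff]
    intro x _
    obtain ⟨gx, hgx⟩ : ∃ y : G, F y = x := by
      have h := hFr x.toAdd
      simpa using h
    have hgx2 : gx ∈ _root_.closure ((Subgroup.closure (S : Set G)) : Set G) := by
      have h : gx ∈ (Subgroup.closure (S : Set G)).topologicalClosure := by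
        rw [hS]; trivial
      exact h
    have himg : F gx ∈ _root_.closure (⇑F '' ((Subgroup.closure (S : Set G)) : Set G)) :=
      (image_closure_subset_closure_image hFcont) (Set.mem_image_of_mem F hgx2)
    rw [IsClosed.closure_eq (isClosed_discrete _)] at himg
    have heqset : ⇑F '' ((Subgroup.closure (S : Set G)) : Set G)
        = ((Subgroup.closure (⇑F '' (S : Set G))) : Set P) := by
      rw [← MonoidHom.map_closure, Subgroup.coe_map]
    rw [heqset] at himg
    rw [← hgx]
    exact himg
  let S' : Finset (Fin m → ZMod p) := S.image (fun y => (F y).toAdd)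
  have hspan2 : Submodule.span (ZMod p) (S' : Set (Fin m → ZMod p)) = ⊤ := by
    rw [eq_top_iff]
    intro x _
    set R : Submodule (ZMod p) (Fin m → ZMod p) :=
      Submodule.span (ZMod p) (S' : Set (Fin m → ZMod p)) with hRdef
    let RB : Subgroup P := AddSubgroup.toSubgroup (R.toAddSubgroup)
    have h1 : ⇑F '' (S : Set G) ⊆ (RB : Set P) := by
      rintro _ ⟨s, hs, rfl⟩
      show (F s).toAdd ∈ R
      apply Submodule.subset_span
      exact Finset.mem_coe.2 (Finset.mem_image.2 ⟨s, hs, rfl⟩)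
    have h2 := (Subgroup.closure_le RB).2 h1
    rw [hQtop] at h2
    have h3 := h2 (Subgroup.mem_top (Multiplicative.ofAdd x))
    exact h3
  have hmS : m ≤ S.card := by
    have h3 : Module.finrank (ZMod p) (Fin m → ZMod p) = m := by
      rw [Module.finrank_pi]; simp
    calc m = Module.finrank (ZMod p) (⊤ : Submodule (ZMod p) (Fin m → ZMod p)) := by
          rw [finrank_top, h3]
      _ = Module.finrank (ZMod p)
            (Submodule.span (ZMod p) (S' : Set (Fin m → ZMod p))) := by rw [hspan2]
      _ = Set.finrank (ZMod p) (S' : Set (Fin m → ZMod p)) := rfl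
      _ ≤ S'.card := finrank_span_finset_le_card S'
      _ ≤ S.card := Finset.card_image_le
  omega
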